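/- Let h : E → ℝ be convex and continuous, μ > 0, and x ∈ E. Suppose v ∈ E is a subgradient of h at x, i.e. h(y) ≥ h(x) + ⟨v, y − x⟩ for all y ∈ E. Then 0 ≤ h(x) − (1/μ)·h_μ(x) ≤ (μ/2)·‖v‖². In particular, if h is Lipschitz continuous with constant S > 0, then 0 ≤ h(x) − (1/μ)·h_μ(x) ≤ (μ/2)·S² for all x ∈ E. -/

import Mathlib

open scoped RealInnerProductSpace

lemma moreau_aux {n : ℕ} (h : EuclideanSpace ℝ (Fin n) → ℝ) (μ c : ℝ)
    (hμpos : 0 < μ) (hc : 0 ≤ c) (x : EuclideanSpace ℝ (Fin n))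
    (hx : ∀ w, h x - c * ‖w - x‖ ≤ h w) :
    0 ≤ h x - (1 / μ) * (⨅ w : EuclideanSpace ℝ (Fin n),
        ((1 / 2) * ‖w - x‖ ^ 2 + μ * h w)) ∧
      h x - (1 / μ) * (⨅ w : EuclideanSpace ℝ (Fin n),
        ((1 / 2) * ‖w - x‖ ^ 2 + μ * h w)) ≤ (μ / 2) * c ^ 2 := by
  set f : EuclideanSpace ℝ (Fin n) → ℝ := fun w => (1 / 2) * ‖w - x‖ ^ 2 + μ * h w with hf
  have key : ∀ w, μ * h x - μ ^ 2 * c ^ 2 / 2 ≤ f w := by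
    intro w
    have h1 := hx w
    have h2 : (0:ℝ) ≤ ‖w - x‖ := norm_nonneg _
    have h3 : μ * (h x - c * ‖w - x‖) ≤ μ * h w :=
      mul_le_mul_of_nonneg_left h1 hμpos.le
    have h4 : (0:ℝ) ≤ (‖w - x‖ - μ * c) ^ 2 := sq_nonneg _
    simp only [hf]
    nlinarith [h3, h4]
  have hbdd : BddBelow (Set.range f) := by
    refine ⟨μ * h x - μ ^ 2 * c ^ 2 / 2, ?_⟩
    rintro y ⟨w, rfl⟩
    exact key w
  have hle : (⨅ w, f w) ≤ μ * h x := by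
    have := ciInf_le hbdd x
    simpa [hf] using this
  have hge : μ * h x - μ ^ 2 * c ^ 2 / 2 ≤ ⨅ w, f w := le_ciInf key
  have hμinv : (0:ℝ) < 1 / μ := by positivity
  constructor
  · have := mul_le_mul_of_nonneg_left hle hμinv.le
    have heq : (1 / μ) * (μ * h x) = h x := by field_simp
    linarith [heq ▸ this]
  · have := mul_le_mul_of_nonneg_left hge hμinv.le
    have heq : (1 / μ) * (μ * h x - μ ^ 2 * c ^ 2 / 2) = h x - μ * c ^ 2 / 2 := by
      field_simp
    rw [heq] at this
    linarith

/-- Lemma: the Moreau envelope `h_μ` approximates `h` from below: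
`0 ≤ h(x) − (1/μ)h_μ(x) ≤ (μ/2)‖v‖²` for any subgradient `v` of `h` at `x`;
in particular, if `h` is `S`-Lipschitz the gap is at most `(μ/2)S²` everywhere. -/
theorem moreau_envelope_uniform_bound {n : ℕ}
    (h : EuclideanSpace ℝ (Fin n) → ℝ) (μ : ℝ) (hμpos : 0 < μ)
    (hhconv : ConvexOn ℝ Set.univ h) (hhcont : Continuous h)
    (x v : EuclideanSpace ℝ (Fin n))
    (hv : ∀ y, h y ≥ h x + ⟪v, y - x⟫) :
    (0 ≤ h x - (1 / μ) * (⨅ w : EuclideanSpace ℝ (Fin n),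
        ((1 / 2) * ‖w - x‖ ^ 2 + μ * h w)) ∧
      h x - (1 / μ) * (⨅ w : EuclideanSpace ℝ (Fin n),
        ((1 / 2) * ‖w - x‖ ^ 2 + μ * h w)) ≤ (μ / 2) * ‖v‖ ^ 2) ∧
    ∀ S : ℝ, 0 < S → (∀ a b, |h a - h b| ≤ S * ‖a - b‖) →
      ∀ y : EuclideanSpace ℝ (Fin n),
        0 ≤ h y - (1 / μ) * (⨅ w : EuclideanSpace ℝ (Fin n),
            ((1 / 2) * ‖w - y‖ ^ 2 + μ * h w)) ∧
          h y - (1 / μ) * (⨅ w : EuclideanSpace ℝ (Fin n),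
            ((1 / 2) * ‖w - y‖ ^ 2 + μ * h w)) ≤ (μ / 2) * S ^ 2 := by
  constructor
  · refine moreau_aux h μ ‖v‖ hμpos (norm_nonneg v) x ?_
    intro w
    have h1 := hv w
    have h2 : |⟪v, w - x⟫| ≤ ‖v‖ * ‖w - x‖ := abs_real_inner_le_norm v (w - x)
    have h3 : -(‖v‖ * ‖w - x‖) ≤ ⟪v, w - x⟫ := neg_le_of_abs_le h2
    linarith
  · intro S hS hLip y
    refine moreau_aux h μ S hμpos hS.le y ?_
    intro w
    have h1 := hLip y w
    have h2 : h y - h w ≤ S * ‖y - w‖ := le_of_abs_le h1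
    rw [show ‖y - w‖ = ‖w - y‖ from norm_sub_rev _ _] at h2
    linarith
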